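/- Fix an odd integer k = 2q+1 ≥ 5 and let I_k be the odd interior gadget. Then there exists a k-leaf root T of I_k such that m_T(t) = k and m_T(b) = 3. -/

import Mathlib

open SimpleGraph

/-- A vertex of a graph is a leaf if it has exactly one neighbor. -/
def IsLeafVert {W : Type} (T : SimpleGraph W) (w : W) : Prop := ∃! u, T.Adj w u

/-- `T` (a finite tree on vertex type `W`) together with the injection `f` of the
vertices of `G` onto the leaves of `T` is a `k`-leaf root of `G`:  the leaves of `T`
are exactly the image of `f`, and two distinct vertices of `G` are adjacent iff
their distance in `T` is at most `k`. -/
def IsLeafRoot {V W : Type} (G : SimpleGraph V) (k : ℕ)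
    (T : SimpleGraph W) (f : V → W) : Prop :=
  Finite W ∧ T.IsTree ∧ Function.Injective f ∧
    (∀ w : W, (∃ v, f v = w) ↔ IsLeafVert T w) ∧
    (∀ u v : V, u ≠ v → (G.Adj u v ↔ T.dist (f u) (f v) ≤ k))

/-- `G` is a `k`-leaf power: it admits a `k`-leaf root. -/
def IsKLeafPower {V : Type} (G : SimpleGraph V) (k : ℕ) : Prop :=
  ∃ (W : Type) (T : SimpleGraph W) (f : V → W), IsLeafRoot G k T f

/-- `m_T(v)`: the minimum over all `u ≠ v` of the distance in the leaf root `T`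
between the leaves corresponding to `u` and `v`. -/
noncomputable def mval {V W : Type} (T : SimpleGraph W) (f : V → W) (v : V) : ℕ :=
  sInf {d | ∃ u, u ≠ v ∧ T.dist (f u) (f v) = d}

/-- A vertex has degree at least three. -/
def HasDegreeGEThree {W : Type} (T : SimpleGraph W) (w : W) : Prop :=
  ∃ a b c : W, a ≠ b ∧ a ≠ c ∧ b ≠ c ∧ T.Adj w a ∧ T.Adj w b ∧ T.Adj w c

/-- A spine of a tree: a path containing every vertex of degree at least 3.  A tree
having a spine is exactly a caterpillar subdivision. -/
def IsSpine {W : Type} (T : SimpleGraph W) {a b : W} (p : T.Walk a b) : Prop :=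
  p.IsPath ∧ ∀ w : W, HasDegreeGEThree T w → w ∈ p.support

/-- A linear `k`-leaf root: a `k`-leaf root whose tree is a caterpillar subdivision. -/
def IsLinearLeafRoot {V W : Type} (G : SimpleGraph V) (k : ℕ)
    (T : SimpleGraph W) (f : V → W) : Prop :=
  IsLeafRoot G k T f ∧ ∃ (a b : W) (p : T.Walk a b), IsSpine T p

/-- `G` is a linear `k`-leaf power: it admits a linear `k`-leaf root. -/
def IsLinearKLeafPower {V : Type} (G : SimpleGraph V) (k : ℕ) : Prop :=
  ∃ (W : Type) (T : SimpleGraph W) (f : V → W), IsLinearLeafRoot G k T f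

/-- A cycle of length `n` in `G`, given as an injective map from `ZMod n` with
consecutive images adjacent. -/
def IsCycleIn {V : Type} (G : SimpleGraph V) (n : ℕ) (f : ZMod n → V) : Prop :=
  Function.Injective f ∧ ∀ i : ZMod n, G.Adj (f i) (f (i + 1))

/-- `G` is chordal: every cycle of length at least 4 has a chord. -/
def Chordal {V : Type} (G : SimpleGraph V) : Prop :=
  ∀ n : ℕ, 4 ≤ n → ∀ f : ZMod n → V, IsCycleIn G n f →
    ∃ i j : ZMod n, j ≠ i ∧ j ≠ i + 1 ∧ j ≠ i - 1 ∧ G.Adj (f i) (f j)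

/-- `G` is strongly chordal: chordal, and every even cycle of length at least 6 has
an odd chord (a chord joining two vertices an odd distance apart along the cycle). -/
def StronglyChordal {V : Type} (G : SimpleGraph V) : Prop :=
  Chordal G ∧ ∀ n : ℕ, 6 ≤ n → Even n → ∀ f : ZMod n → V, IsCycleIn G n f →
    ∃ i j : ZMod n, Odd ((j - i).val) ∧ j ≠ i + 1 ∧ j ≠ i - 1 ∧ G.Adj (f i) (f j)

/-- Vertices of the odd interior gadget for `k = 2q+1`: `t`, `b`,
`x i` for `i : Fin q` (representing `x_{i+1}`), and `y i` for `i : Fin (q-1)`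
(representing `y_{i+2}`). -/
inductive IVert (q : ℕ) : Type where
  | t : IVert q
  | b : IVert q
  | x : Fin q → IVert q
  | y : Fin (q - 1) → IVert q

/-- The odd interior gadget `I_k` for odd `k = 2q+1 ≥ 5`: edges `t x_i` and `b x_i`
for all `1 ≤ i ≤ q`, `x_i x_j` for `i < j` (so `X` is a clique), `y_i x_j` for
`2 ≤ i ≤ j ≤ q`, and `b y_q`. -/
def oddGadget (q : ℕ) : SimpleGraph (IVert q) :=
  SimpleGraph.fromRel (fun u v => match u, v with
    | .t, .x _ => True
    | .b, .x _ => True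
    | .x i, .x j => i ≠ j
    | .y a, .x c => (a : ℕ) + 1 ≤ (c : ℕ)
    | .b, .y a => (a : ℕ) = q - 2
    | _, _ => False)


section Generic
variable {V : Type} (G : SimpleGraph V)

lemma getVert_support_getElem? {u v : V} (p : G.Walk u v) :
    ∀ i, i ≤ p.length → p.support[i]? = some (p.getVert i) := by
  induction p with
  | nil =>
    intro i hi
    simp only [Walk.length_nil, Nat.le_zero] at hi
    subst hi
    simp [SimpleGraph.Walk.getVert]
  | cons h p ih =>
    intro i hi
    cases i with
    | zero => simp [SimpleGraph.Walk.getVert]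
    | succ n =>
      simp only [Walk.support_cons, Walk.getVert_cons_succ, List.getElem?_cons_succ]
      exact ih n (by simpa using hi)

lemma parent_acyclic (depth : V → ℕ)
    (hstep : ∀ u v, G.Adj u v → depth u + 1 = depth v ∨ depth v + 1 = depth u)
    (hpar : ∀ v a b, G.Adj v a → G.Adj v b → depth a + 1 = depth v →
      depth b + 1 = depth v → a = b) :
    G.IsAcyclic := by
  classical
  intro v0 c0 hc0
  obtain ⟨m, hm, hmax⟩ := Finset.exists_max_image c0.support.toFinset depth
    ⟨v0, by simp⟩
  simp only [List.mem_toFinset] at hm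
  set c := c0.rotate m hm with hcdef
  have hc : c.IsCycle := hc0.rotate hm
  have hmem : ∀ w ∈ c.support, depth w ≤ depth m := by
    intro w hw
    apply hmax
    rw [List.mem_toFinset]
    have hperm := Walk.support_rotate c0 m hm
    rcases List.mem_cons.mp (by rw [Walk.support_eq_cons c] at hw; exact hw) with h | h
    · subst h; exact hm
    · have := hperm.mem_iff.mp h
      exact List.mem_of_mem_tail this
  have hn3 : 3 ≤ c.length := hc.three_le_length
  set u := c.getVert 1 with hu
  set w := c.getVert (c.length - 1) with hw
  have hadj_u : G.Adj m u := by
    have := c.adj_getVert_succ (i := 0) (by omega)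
    simpa [Walk.getVert_zero] using this
  have hadj_w : G.Adj m w := by
    have := c.adj_getVert_succ (i := c.length - 1) (by omega)
    have h2 : c.getVert (c.length - 1 + 1) = m := by
      have : c.length - 1 + 1 = c.length := by omega
      rw [this, Walk.getVert_length]
    rw [h2] at this
    exact this.symm
  have humem : u ∈ c.support := Walk.mem_support_iff_exists_getVert.mpr ⟨1, rfl, by omega⟩
  have hwmem : w ∈ c.support := Walk.mem_support_iff_exists_getVert.mpr ⟨c.length - 1, rfl, by omega⟩
  have hdu : depth u + 1 = depth m := by
    rcases hstep _ _ hadj_u with h | h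
    · have := hmem u humem; omega
    · exact h
  have hdw : depth w + 1 = depth m := by
    rcases hstep _ _ hadj_w with h | h
    · have := hmem w hwmem; omega
    · exact h
  have huw : u = w := hpar m u w hadj_u hadj_w hdu hdw
  -- derive contradiction from nodup of support tail
  have hnodup : c.support.tail.Nodup := hc.2
  have hlen : c.support.length = c.length + 1 := Walk.length_support c
  have h1 : c.support.tail[0]? = some u := by
    have := getVert_support_getElem? G c 1 (by omega)
    rw [List.getElem?_tail]
    simpa using this
  have h2 : c.support.tail[c.length - 2]? = some w := by
    have := getVert_support_getElem? G c (c.length - 1) (by omega)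
    have he : c.length - 2 + 1 = c.length - 1 := by omega
    rw [List.getElem?_tail, he]
    exact this
  rw [huw, ← h2] at h1
  have h0 : (0:ℕ) < c.support.tail.length := by
    simp only [List.length_tail, hlen]; omega
  have := (List.getElem?_inj h0 hnodup).mp h1
  omega

lemma parent_connected (depth : V → ℕ) (root : V)
    (h : ∀ v, v ≠ root → ∃ u, G.Adj v u ∧ depth u < depth v) : G.Connected := by
  have key : ∀ n v, depth v ≤ n → G.Reachable v root := by
    intro n
    induction n with
    | zero =>
      intro v hv
      by_cases hr : v = root
      · exact hr ▸ Reachable.refl _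
      · obtain ⟨u, _, hd⟩ := h v hr; omega
    | succ n ih =>
      intro v hv
      by_cases hr : v = root
      · exact hr ▸ Reachable.refl _
      · obtain ⟨u, hadj, hd⟩ := h v hr
        exact (hadj.reachable).trans (ih u (by omega))
  haveI : Nonempty V := ⟨root⟩
  exact Connected.mk (fun a b =>
    (key (depth a) a le_rfl).trans (key (depth b) b le_rfl).symm)

lemma walk_lipschitz (φ : V → ℕ)
    (hφ : ∀ u v, G.Adj u v → φ v ≤ φ u + 1) :
    ∀ {a b : V} (p : G.Walk a b), φ b ≤ φ a + p.length := by
  intro a b p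
  induction p with
  | nil => simp
  | cons h p ih =>
    have := hφ _ _ h
    simp only [Walk.length_cons]
    omega

lemma dist_lower (φ : V → ℕ)
    (hφ : ∀ u v, G.Adj u v → φ v ≤ φ u + 1)
    {a b : V} (hr : G.Reachable a b) : φ b ≤ φ a + G.dist a b := by
  obtain ⟨p, hp⟩ := hr.exists_walk_length_eq_dist
  rw [← hp]
  exact walk_lipschitz G φ hφ p

end Generic


namespace OGRT

variable (q : ℕ)

/-- code for finiteness / decidable equality -/
def code : IVert q → Bool ⊕ (Fin q ⊕ Fin (q - 1))
  | .t => Sum.inl true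
  | .b => Sum.inl false
  | .x j => Sum.inr (Sum.inl j)
  | .y i => Sum.inr (Sum.inr i)

lemma code_injective : Function.Injective (code q) := by
  intro a b h
  cases a <;> cases b <;> simp [code] at h <;> simp [h]

noncomputable instance : Fintype (IVert q) := Fintype.ofInjective _ (code_injective q)
noncomputable instance : DecidableEq (IVert q) := Classical.decEq _

/-- attach position on the spine -/
def A : IVert q → ℕ
  | .t => 0
  | .b => 2 * q
  | .x j => q + j
  | .y i => if (i : ℕ) = q - 2 then 2 * q else q + 1 + i

/-- pendant height -/
def H : IVert q → ℕ
  | .t => 1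
  | .b => 1
  | .x j => q - j
  | .y i => if (i : ℕ) = q - 2 then 2 * q - 2 else q + 2 + i

lemma A_le (ℓ : IVert q) : A q ℓ ≤ 2 * q := by
  cases ℓ with
  | t => simp [A]
  | b => simp [A]
  | x j => have := j.isLt; simp [A]; omega
  | y i => have := i.isLt; simp only [A]; split <;> omega

lemma H_le (ℓ : IVert q) (hq : 1 ≤ q) : H q ℓ ≤ 2 * q := by
  cases ℓ with
  | t => simp [H]; omega
  | b => simp [H]; omega
  | x j => simp [H]; omega
  | y i => have := i.isLt; simp only [H]; split <;> omega

lemma H_pos (ℓ : IVert q) (hq : 2 ≤ q) : 1 ≤ H q ℓ := by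
  cases ℓ with
  | t => simp [H]
  | b => simp [H]
  | x j => have := j.isLt; simp [H]; omega
  | y i => have := i.isLt; simp only [H]; split <;> omega

abbrev Raw := Option (IVert q) × ℕ

def valid : Raw q → Prop
  | (none, a) => a ≤ 2 * q
  | (some ℓ, j) => 1 ≤ j ∧ j ≤ H q ℓ

def W := { p : Raw q // valid q p }

lemma finiteW (hq : 1 ≤ q) : Finite (W q) := by
  have : Function.Injective (fun w : W q =>
      (w.1.1, (⟨w.1.2, by
        rcases w with ⟨⟨o, n⟩, hv⟩
        cases o with
        | none => simpa [valid] using Nat.lt_succ_of_le hv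
        | some ℓ =>
          obtain ⟨h1, h2⟩ := hv
          exact Nat.lt_succ_of_le (h2.trans (H_le q ℓ hq))⟩ : Fin (2 * q + 1)))) := by
    intro a b h
    apply Subtype.ext
    rcases a with ⟨⟨o1, n1⟩, _⟩; rcases b with ⟨⟨o2, n2⟩, _⟩
    simp only [Prod.mk.injEq, Fin.mk.injEq] at h
    simp [h.1, h.2]
  exact Finite.of_injective _ this

/-- the parent-edge relation on raw vertices -/
def step : Raw q → Raw q → Prop
  | (none, a), (none, b) => b = a + 1
  | (none, a), (some ℓ, j) => a = A q ℓ ∧ j = 1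
  | (some ℓ, j), (some ℓ', j') => ℓ = ℓ' ∧ j' = j + 1
  | (some _, _), (none, _) => False

def T : SimpleGraph (W q) := SimpleGraph.fromRel (fun u v => step q u.1 v.1)

def depth : W q → ℕ := fun w => match w.1 with
  | (none, a) => a
  | (some ℓ, j) => A q ℓ + j

lemma T_adj {u v : W q} : (T q).Adj u v ↔ u ≠ v ∧ (step q u.1 v.1 ∨ step q v.1 u.1) :=
  Iff.rfl

lemma step_depth {u v : W q} (h : step q u.1 v.1) : depth q v = depth q u + 1 := by
  rcases u with ⟨⟨o1, n1⟩, hu⟩; rcases v with ⟨⟨o2, n2⟩, hv⟩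
  cases o1 <;> cases o2 <;> simp only [step] at h <;> simp [depth]
  · omega
  · obtain ⟨h1, h2⟩ := h; subst h1; subst h2; omega
  · obtain ⟨h1, h2⟩ := h; subst h1; subst h2; omega

lemma step_ne {u v : W q} (h : step q u.1 v.1) : u ≠ v := by
  intro hne
  have := step_depth q h
  rw [hne] at this
  omega

lemma parent_unique {a b v : W q} (ha : step q a.1 v.1) (hb : step q b.1 v.1) : a = b := by
  rcases a with ⟨⟨o1, n1⟩, hva⟩; rcases b with ⟨⟨o2, n2⟩, hvb⟩; rcases v with ⟨⟨o3, n3⟩, hvv⟩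
  apply Subtype.ext
  simp only [valid] at hva hvb hvv
  cases o1 <;> cases o2 <;> cases o3 <;> simp only [step] at ha hb
  · -- nnn
    obtain rfl := ha; obtain h := hb
    simp only [Prod.mk.injEq, true_and]; omega
  · -- nns : both spine parents of pendant
    obtain ⟨h1, h2⟩ := ha; obtain ⟨h3, h4⟩ := hb
    simp only [Prod.mk.injEq, true_and]; omega
  · -- nss : spine parent vs pendant parent
    exfalso
    obtain ⟨h1, h2⟩ := ha; obtain ⟨h3, h4⟩ := hb
    omega
  · -- sns
    exfalso
    obtain ⟨h1, h2⟩ := ha; obtain ⟨h3, h4⟩ := hb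
    omega
  · -- sss
    obtain ⟨h1, h2⟩ := ha; obtain ⟨h3, h4⟩ := hb
    subst h1; subst h3
    simp only [Prod.mk.injEq, Option.some.injEq, true_and]; omega

lemma adj_of_step {u v : W q} (h : step q u.1 v.1) : (T q).Adj u v :=
  ⟨step_ne q h, Or.inl h⟩

/-- the root of the tree -/
def root : W q := ⟨(none, 0), by simp [valid]⟩

lemma exists_parent (hq : 2 ≤ q) (v : W q) (hv : v ≠ root q) :
    ∃ u : W q, step q u.1 v.1 := by
  rcases v with ⟨⟨o, n⟩, hval⟩
  cases o with
  | none =>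
    have hn : n ≠ 0 := by
      intro h; apply hv; apply Subtype.ext; simp [root, h]
    refine ⟨⟨(none, n - 1), ?_⟩, ?_⟩
    · simp only [valid] at hval ⊢; omega
    · simp only [step]; omega
  | some ℓ =>
    simp only [valid] at hval
    rcases Nat.lt_or_ge 1 n with h1 | h1
    · refine ⟨⟨(some ℓ, n - 1), ?_⟩, ?_⟩
      · simp only [valid]; omega
      · simp only [step]; exact ⟨trivial, by omega⟩
    · have hn1 : n = 1 := by omega
      refine ⟨⟨(none, A q ℓ), A_le q ℓ⟩, ?_⟩
      simp only [step]
      exact ⟨trivial, hn1⟩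

lemma T_connected (hq : 2 ≤ q) : (T q).Connected := by
  apply parent_connected (T q) (depth q) (root q)
  intro v hv
  obtain ⟨u, hu⟩ := exists_parent q hq v hv
  exact ⟨u, (adj_of_step q hu).symm, by have := step_depth q hu; omega⟩

lemma T_isTree (hq : 2 ≤ q) : (T q).IsTree := by
  refine ⟨T_connected q hq, ?_⟩
  apply parent_acyclic (T q) (depth q)
  · intro u v huv
    rcases huv.2 with h | h
    · exact Or.inl (step_depth q h).symm
    · exact Or.inr (step_depth q h).symm
  · intro v a c hva hvc hda hdc
    have ha : step q a.1 v.1 := by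
      rcases hva.2 with h | h
      · have := step_depth q h; omega
      · exact h
    have hc : step q c.1 v.1 := by
      rcases hvc.2 with h | h
      · have := step_depth q h; omega
      · exact h
    exact parent_unique q ha hc

/-- the leaf map -/
def f (hq : 2 ≤ q) : IVert q → W q := fun ℓ => ⟨(some ℓ, H q ℓ), ⟨H_pos q ℓ hq, le_rfl⟩⟩

lemma f_injective (hq : 2 ≤ q) : Function.Injective (f q hq) := by
  intro a c h
  simpa [f] using congrArg (fun w : W q => w.1.1) h

/-- truncated ℕ distance -/
def dd (a b : ℕ) : ℕ := (a - b) + (b - a)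

def spW (a : ℕ) (h : a ≤ 2 * q) : W q := ⟨(none, a), h⟩

lemma spine_walk_le (a b : ℕ) (hab : a ≤ b) (hb : b ≤ 2 * q) :
    ∃ p : (T q).Walk (spW q a (le_trans hab hb)) (spW q b hb), p.length = b - a := by
  induction b with
  | zero =>
    obtain rfl : a = 0 := by omega
    exact ⟨Walk.nil, rfl⟩
  | succ n ih =>
    rcases Nat.lt_or_ge a (n + 1) with h | h
    · have han : a ≤ n := by omega
      obtain ⟨p, hp⟩ := ih han (by omega)
      have hadj : (T q).Adj (spW q n (by omega)) (spW q (n + 1) hb) :=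
        adj_of_step q (by simp [spW, step])
      exact ⟨p.concat hadj, by simp [Walk.length_concat, hp]; omega⟩
    · obtain rfl : a = n + 1 := by omega
      exact ⟨Walk.nil, by simp⟩

lemma spine_walk (a b : ℕ) (ha : a ≤ 2 * q) (hb : b ≤ 2 * q) :
    ∃ p : (T q).Walk (spW q a ha) (spW q b hb), p.length = dd a b := by
  rcases le_total a b with h | h
  · obtain ⟨p, hp⟩ := spine_walk_le q a b h hb
    exact ⟨p, by simp [dd, hp]; omega⟩
  · obtain ⟨p, hp⟩ := spine_walk_le q b a h ha
    exact ⟨p.reverse, by simp [dd, hp]; omega⟩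

lemma pend_walk (ℓ : IVert q) :
    ∀ j (h1 : 1 ≤ j) (h2 : j ≤ H q ℓ),
    ∃ p : (T q).Walk ⟨(some ℓ, j), ⟨h1, h2⟩⟩ (spW q (A q ℓ) (A_le q ℓ)), p.length = j := by
  intro j
  induction j with
  | zero => omega
  | succ n ih =>
    intro h1 h2
    rcases Nat.lt_or_ge 1 (n + 1) with h | h
    · have hn1 : 1 ≤ n := by omega
      obtain ⟨p, hp⟩ := ih hn1 (by omega)
      have hadj : (T q).Adj (⟨(some ℓ, n + 1), ⟨h1, h2⟩⟩ : W q) ⟨(some ℓ, n), ⟨hn1, by omega⟩⟩ :=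
        ((adj_of_step q (u := ⟨(some ℓ, n), ⟨hn1, by omega⟩⟩) (by exact ⟨rfl, rfl⟩)).symm)
      exact ⟨Walk.cons hadj p, by have := Walk.length_cons hadj p; omega⟩
    · obtain rfl : n = 0 := by omega
      have hadj : (T q).Adj (⟨(some ℓ, 1), ⟨h1, h2⟩⟩ : W q) (spW q (A q ℓ) (A_le q ℓ)) :=
        ((adj_of_step q (u := spW q (A q ℓ) (A_le q ℓ)) (by exact ⟨rfl, rfl⟩)).symm)
      exact ⟨Walk.cons hadj Walk.nil, by have := Walk.length_cons hadj (Walk.nil : (T q).Walk (spW q (A q ℓ) (A_le q ℓ)) _); simp only [Walk.length_nil] at this; omega⟩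

lemma dist_upper (hq : 2 ≤ q) (u v : IVert q) :
    (T q).dist (f q hq u) (f q hq v) ≤ H q u + H q v + dd (A q u) (A q v) := by
  obtain ⟨p1, hp1⟩ := pend_walk q u (H q u) (H_pos q u hq) le_rfl
  obtain ⟨p2, hp2⟩ := spine_walk q (A q u) (A q v) (A_le q u) (A_le q v)
  obtain ⟨p3, hp3⟩ := pend_walk q v (H q v) (H_pos q v hq) le_rfl
  have := SimpleGraph.dist_le ((p1.append p2).append p3.reverse)
  have e1 := Walk.length_append (p1.append p2) p3.reverse
  have e2 := Walk.length_append p1 p2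
  have e3 := Walk.length_reverse p3
  calc (T q).dist (f q hq u) (f q hq v) ≤ _ := this
    _ = H q u + H q v + dd (A q u) (A q v) := by omega

noncomputable def phi (ℓ0 : IVert q) : W q → ℕ := fun w => match w.1 with
  | (none, a) => H q ℓ0 + dd (A q ℓ0) a
  | (some ℓ, j) => if ℓ = ℓ0 then dd (H q ℓ0) j else H q ℓ0 + dd (A q ℓ0) (A q ℓ) + j

lemma phi_lipschitz (ℓ0 : IVert q) (u v : W q) (h : (T q).Adj u v) :
    phi q ℓ0 v ≤ phi q ℓ0 u + 1 := by
  have key : ∀ a c : W q, step q a.1 c.1 →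
      phi q ℓ0 c ≤ phi q ℓ0 a + 1 ∧ phi q ℓ0 a ≤ phi q ℓ0 c + 1 := by
    intro a c hstep
    obtain ⟨⟨o1, n1⟩, hva⟩ := a
    obtain ⟨⟨o2, n2⟩, hvc⟩ := c
    cases o1 with
    | none =>
      cases o2 with
      | none =>
        simp only [step] at hstep
        subst hstep
        simp only [phi, dd]
        omega
      | some ℓ =>
        obtain ⟨h1, h2⟩ := hstep
        subst h1; subst h2
        by_cases hl : ℓ = ℓ0
        · subst hl
          simp only [phi, dd, eq_self_iff_true, if_true]
          omega
        · simp only [phi, if_neg hl, dd]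
          omega
    | some ℓ =>
      cases o2 with
      | none => exact hstep.elim
      | some ℓ' =>
        obtain ⟨h1, h2⟩ := hstep
        subst h1; subst h2
        by_cases hl : ℓ = ℓ0
        · subst hl
          simp only [phi, dd, eq_self_iff_true, if_true]
          omega
        · simp only [phi, if_neg hl, dd]
          omega
  rcases h.2 with hs | hs
  · exact (key u v hs).1
  · exact (key v u hs).2

lemma phi_self (hq : 2 ≤ q) (u : IVert q) : phi q u (f q hq u) = 0 := by
  simp [phi, f, dd]

lemma phi_other (hq : 2 ≤ q) (u v : IVert q) (h : v ≠ u) :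
    phi q u (f q hq v) = H q u + dd (A q u) (A q v) + H q v := by
  simp [phi, f, if_neg h]

lemma dist_eq (hq : 2 ≤ q) (u v : IVert q) (huv : u ≠ v) :
    (T q).dist (f q hq u) (f q hq v) = H q u + H q v + dd (A q u) (A q v) := by
  refine le_antisymm (dist_upper q hq u v) ?_
  have hr : (T q).Reachable (f q hq u) (f q hq v) :=
    (T_connected q hq).preconnected _ _
  have hlow := dist_lower (T q) (phi q u) (fun a c hac => phi_lipschitz q u a c hac) hr
  rw [phi_self q hq u, phi_other q hq u v (Ne.symm huv)] at hlow
  omega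

end OGRT


lemma OGRT.adj_iff (q : ℕ) (hq : 2 ≤ q) (u v : IVert q) (huv : u ≠ v) :
    ((oddGadget q).Adj u v ↔ H q u + H q v + dd (A q u) (A q v) ≤ 2 * q + 1) := by
  have hadj : (oddGadget q).Adj u v ↔ _ := SimpleGraph.fromRel_adj _ u v
  rw [hadj]
  cases u with
  | t =>
    cases v with
    | t => exact absurd rfl huv
    | b => simp [A, H, dd]; omega
    | x j => have := j.isLt; simp [A, H, dd]; omega
    | y i => have := i.isLt; have h2 : (i:ℕ) ≤ q - 2 := by omega
             simp only [ne_eq, A, H, dd]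
             split_ifs <;> simp <;> omega
  | b =>
    cases v with
    | t => simp [A, H, dd]; omega
    | b => exact absurd rfl huv
    | x j => have := j.isLt; simp [A, H, dd]; omega
    | y i => have := i.isLt
             simp only [ne_eq, A, H, dd]
             split_ifs <;> simp <;> omega
  | x j =>
    cases v with
    | t => have := j.isLt; simp [A, H, dd]; omega
    | b => have := j.isLt; simp [A, H, dd]; omega
    | x j' =>
      have := j.isLt; have := j'.isLt
      have hne : (j:ℕ) ≠ (j':ℕ) := by
        intro h; exact huv (congrArg IVert.x (Fin.ext h))
      simp only [ne_eq, IVert.x.injEq, A, H, dd]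
      have hne' : ¬ (j = j') := fun h => huv (congrArg IVert.x h)
      simp [hne']
      omega
    | y i =>
      have := j.isLt; have := i.isLt
      simp only [ne_eq, A, H, dd]
      split_ifs <;> simp <;> omega
  | y i =>
    cases v with
    | t => have := i.isLt
           simp only [ne_eq, A, H, dd]
           split_ifs <;> simp <;> omega
    | b => have := i.isLt
           simp only [ne_eq, A, H, dd]
           split_ifs <;> simp <;> omega
    | x j =>
      have := j.isLt; have := i.isLt
      simp only [ne_eq, A, H, dd]
      split_ifs <;> simp <;> omega
    | y i' =>
      have := i.isLt; have := i'.isLt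
      have hne : ((i:ℕ)) ≠ ((i':ℕ)) := by
        intro h; exact huv (congrArg IVert.y (Fin.ext h))
      simp only [ne_eq, A, H, dd]
      split_ifs <;> simp <;> omega

lemma OGRT.tip_ne_root (q : ℕ) (hq : 2 ≤ q) (ℓ : IVert q) : f q hq ℓ ≠ root q := by
  intro h
  have := congrArg (fun w : W q => w.1.1) h
  simp [f, root] at this

lemma OGRT.tip_leaf (q : ℕ) (hq : 2 ≤ q) (ℓ : IVert q) : IsLeafVert (T q) (f q hq ℓ) := by
  obtain ⟨u0, hu0⟩ := exists_parent q hq (f q hq ℓ) (tip_ne_root q hq ℓ)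
  refine ⟨u0, (adj_of_step q hu0).symm, ?_⟩
  intro u hu
  rcases hu.2 with hs | hs
  · exfalso
    obtain ⟨⟨o, n⟩, hv⟩ := u
    cases o with
    | none => exact hs
    | some ℓ' =>
      obtain ⟨h1, h2⟩ := hs
      simp only [valid] at hv
      have h2' : n = H q ℓ + 1 := h2
      have h1' : ℓ = ℓ' := h1
      subst h1'
      omega
  · exact parent_unique q hs hu0

lemma OGRT.not_leaf (q : ℕ) (hq : 2 ≤ q) (w : W q) (h : ∀ ℓ, f q hq ℓ ≠ w) :
    ¬ IsLeafVert (T q) w := by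
  have two_nbrs : ∃ u1 u2 : W q, u1 ≠ u2 ∧ (T q).Adj w u1 ∧ (T q).Adj w u2 := by
    obtain ⟨⟨o, n⟩, hv⟩ := w
    cases o with
    | none =>
      rcases Nat.lt_or_ge 0 n with hn0 | hn0
      · rcases Nat.lt_or_ge n (2*q) with hn2 | hn2
        · -- interior spine
          refine ⟨⟨(none, n-1), by simp only [valid]; omega⟩,
                 ⟨(none, n+1), by simp only [valid]; omega⟩, ?_, ?_, ?_⟩
          · intro hc
            have hc2 : n - 1 = n + 1 := congrArg (fun w : W q => w.1.2) hc
            omega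
          · exact (adj_of_step q (by show n = n - 1 + 1; omega)).symm
          · exact adj_of_step q (by show n + 1 = n + 1; rfl)
        · -- n = 2q : right end
          have hn : n = 2*q := by simp only [valid] at hv; omega
          subst hn
          refine ⟨⟨(none, 2*q-1), by simp only [valid]; omega⟩,
                 ⟨(some (IVert.b), 1), by simp only [valid, H]; omega⟩, ?_, ?_, ?_⟩
          · intro hc
            have hc2 : (none : Option (IVert q)) = some IVert.b :=
              congrArg (fun w : W q => w.1.1) hc
            simp at hc2
          · exact (adj_of_step q (by show 2*q = 2*q - 1 + 1; omega)).symm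
          · exact adj_of_step q ⟨rfl, rfl⟩
      · -- n = 0 : left end
        obtain rfl : n = 0 := by omega
        refine ⟨⟨(none, 1), by simp only [valid]; omega⟩,
               ⟨(some (IVert.t), 1), by simp only [valid, H]; omega⟩, ?_, ?_, ?_⟩
        · intro hc
          have hc2 : (none : Option (IVert q)) = some IVert.t :=
            congrArg (fun w : W q => w.1.1) hc
          simp at hc2
        · exact adj_of_step q (by show (1:ℕ) = 0 + 1; rfl)
        · exact adj_of_step q ⟨rfl, rfl⟩
    | some ℓ =>
      have hv' := hv
      simp only [valid] at hv'
      have hlt : n < H q ℓ := by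
        rcases Nat.lt_or_ge n (H q ℓ) with h1 | h1
        · exact h1
        · exfalso
          apply h ℓ
          apply Subtype.ext
          simp only [f]
          have : n = H q ℓ := by omega
          rw [this]
      obtain ⟨u0, hu0⟩ := exists_parent q hq ⟨(some ℓ, n), hv⟩
        (by intro hc
            have := congrArg (fun w : W q => w.1.1) hc
            simp [root] at this)
      refine ⟨⟨(some ℓ, n+1), by simp only [valid]; omega⟩, u0, ?_, ?_, ?_⟩
      · intro hc
        have hd1 : depth q (⟨(some ℓ, n+1), by simp only [valid]; omega⟩ : W q)
            = A q ℓ + (n+1) := rfl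
        have hd2 := step_depth q hu0
        have hd3 : depth q (⟨(some ℓ, n), hv⟩ : W q) = A q ℓ + n := rfl
        rw [hc] at hd1
        omega
      · exact adj_of_step q (by exact ⟨rfl, rfl⟩)
      · exact (adj_of_step q hu0).symm
  obtain ⟨u1, u2, hne, h1, h2⟩ := two_nbrs
  rintro ⟨u, _, huniq⟩
  exact hne ((huniq u1 h1).trans (huniq u2 h2).symm)

theorem odd_gadget_root_T (q : ℕ) (hq : 2 ≤ q) (k : ℕ) (hk : k = 2 * q + 1) :
    ∃ (W : Type) (T : SimpleGraph W) (f : IVert q → W),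
      IsLeafRoot (oddGadget q) k T f ∧
      mval T f IVert.t = k ∧ mval T f IVert.b = 3 := by
  subst hk
  classical
  refine ⟨OGRT.W q, OGRT.T q, OGRT.f q hq,
    ⟨OGRT.finiteW q (by omega), OGRT.T_isTree q hq, OGRT.f_injective q hq, ?_, ?_⟩, ?_, ?_⟩
  · -- leaves are exactly the image
    intro w
    constructor
    · rintro ⟨v, rfl⟩
      exact OGRT.tip_leaf q hq v
    · intro hleaf
      by_contra him
      push_neg at him
      exact OGRT.not_leaf q hq w him hleaf
  · -- adjacency iff distance
    intro u v huv
    rw [OGRT.dist_eq q hq u v huv, OGRT.adj_iff q hq u v huv]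
  · -- mval t
    apply le_antisymm
    · apply Nat.sInf_le
      refine ⟨IVert.x ⟨0, by omega⟩, by simp, ?_⟩
      rw [OGRT.dist_eq q hq _ _ (by simp)]
      simp [OGRT.A, OGRT.H, OGRT.dd]
      omega
    · apply le_csInf
      · exact ⟨_, ⟨IVert.x ⟨0, by omega⟩, by simp, rfl⟩⟩
      · rintro d ⟨u, hu, rfl⟩
        rw [OGRT.dist_eq q hq _ _ hu]
        cases u with
        | t => exact absurd rfl hu
        | b => simp [OGRT.A, OGRT.H, OGRT.dd]
        | x j => have := j.isLt; simp [OGRT.A, OGRT.H, OGRT.dd]; omega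
        | y i => have := i.isLt
                 simp only [OGRT.A, OGRT.H, OGRT.dd]
                 split_ifs <;> omega
  · -- mval b
    apply le_antisymm
    · apply Nat.sInf_le
      refine ⟨IVert.x ⟨q-1, by omega⟩, by simp, ?_⟩
      rw [OGRT.dist_eq q hq _ _ (by simp)]
      simp [OGRT.A, OGRT.H, OGRT.dd]
      omega
    · apply le_csInf
      · exact ⟨_, ⟨IVert.x ⟨q-1, by omega⟩, by simp, rfl⟩⟩
      · rintro d ⟨u, hu, rfl⟩
        rw [OGRT.dist_eq q hq _ _ hu]
        cases u with
        | t => simp [OGRT.A, OGRT.H, OGRT.dd]; omega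
        | b => exact absurd rfl hu
        | x j => have := j.isLt; simp [OGRT.A, OGRT.H, OGRT.dd]; omega
        | y i => have := i.isLt
                 simp only [OGRT.A, OGRT.H, OGRT.dd]
                 split_ifs <;> omega
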